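/- For every real number a > 1, ∫₀^∞ 1/(1+x^a) dx = (π/a)·csc(π/a). -/

import Mathlib

open MeasureTheory Real

/-- The real Beta integral `∫ t in (0,1), t^(s-1) (1-t)^(-s) = π / sin (π s)` for `0 < s < 1`. -/
lemma beta_reflection {s : ℝ} (hs0 : 0 < s) (hs1 : s < 1) :
    ∫ t in Set.Ioo (0:ℝ) 1, t ^ (s - 1) * (1 - t) ^ (-s) = π / Real.sin (π * s) := by
  have hs0' : 0 < Complex.re (s : ℂ) := by simpa using hs0
  have hs1' : 0 < Complex.re (1 - (s : ℂ)) := by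
    simp [Complex.sub_re]; linarith
  have key := Complex.Gamma_mul_Gamma_eq_betaIntegral hs0' hs1'
  rw [add_sub_cancel, Complex.Gamma_one, one_mul, Complex.Gamma_mul_Gamma_one_sub] at key
  have hbeta : Complex.betaIntegral (s : ℂ) (1 - (s : ℂ)) =
      ((∫ t in Set.Ioo (0:ℝ) 1, t ^ (s - 1) * (1 - t) ^ (-s) : ℝ) : ℂ) := by
    rw [Complex.betaIntegral, intervalIntegral.integral_of_le zero_le_one,
      MeasureTheory.integral_Ioc_eq_integral_Ioo,
      show ((∫ t in Set.Ioo (0:ℝ) 1, t ^ (s - 1) * (1 - t) ^ (-s) : ℝ) : ℂ) =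
        ∫ t in Set.Ioo (0:ℝ) 1, ((t ^ (s - 1) * (1 - t) ^ (-s) : ℝ) : ℂ) from integral_ofReal.symm]
    refine MeasureTheory.setIntegral_congr_fun measurableSet_Ioo fun t ht => ?_
    have ht0 : (0:ℝ) ≤ t := ht.1.le
    have ht1 : (0:ℝ) ≤ 1 - t := by linarith [ht.2]
    rw [Complex.ofReal_mul, Complex.ofReal_cpow ht0, Complex.ofReal_cpow ht1]
    push_cast
    ring_nf
  rw [hbeta] at key
  have hsin : Complex.sin ((π : ℂ) * (s : ℂ)) = ((Real.sin (π * s) : ℝ) : ℂ) := by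
    rw [Complex.ofReal_sin]; push_cast; ring_nf
  rw [hsin, ← Complex.ofReal_div] at key
  exact_mod_cast key.symm

/-- `∫ u in (0,∞), u^(s-1)/(1+u) = π / sin (π s)` for `0 < s < 1`. -/
lemma integral_rpow_div_one_add {s : ℝ} (hs0 : 0 < s) (hs1 : s < 1) :
    ∫ u in Set.Ioi (0:ℝ), u ^ (s - 1) / (1 + u) = π / Real.sin (π * s) := by
  have himg : (fun t : ℝ => t / (1 - t)) '' Set.Ioo 0 1 = Set.Ioi 0 := by
    ext y
    constructor
    · rintro ⟨t, ht, rfl⟩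
      exact div_pos ht.1 (by linarith [ht.2])
    · intro hy
      refine ⟨y / (1 + y), ⟨div_pos hy (by linarith [Set.mem_Ioi.mp hy]), ?_⟩, ?_⟩
      · rw [div_lt_one (by linarith [Set.mem_Ioi.mp hy])]; linarith [Set.mem_Ioi.mp hy]
      · have h1y : (0:ℝ) < 1 + y := by linarith [Set.mem_Ioi.mp hy]
        field_simp
        ring
  have hderiv : ∀ t ∈ Set.Ioo (0:ℝ) 1, HasDerivWithinAt (fun t : ℝ => t / (1 - t))
      (((1 - t) ^ 2)⁻¹) (Set.Ioo 0 1) t := by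
    intro t ht
    have hne : (1 - t) ≠ 0 := by intro h; nlinarith [ht.2, ht.1]
    have := (hasDerivAt_id t).div ((hasDerivAt_id t).const_sub 1) hne
    exact this.hasDerivWithinAt.congr_deriv (by simp only [id]; ring)
  have hinj : Set.InjOn (fun t : ℝ => t / (1 - t)) (Set.Ioo 0 1) := by
    intro x hx y hy h
    have hx' : (1 - x) ≠ 0 := by intro h'; nlinarith [hx.2]
    have hy' : (1 - y) ≠ 0 := by intro h'; nlinarith [hy.2]
    field_simp at h
    linarith
  have := MeasureTheory.integral_image_eq_integral_abs_deriv_smul measurableSet_Ioo hderiv hinj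
    (fun u => u ^ (s - 1) / (1 + u))
  rw [himg] at this
  rw [this, ← beta_reflection hs0 hs1]
  refine MeasureTheory.setIntegral_congr_fun measurableSet_Ioo fun t ht => ?_
  have ht0 : (0:ℝ) < t := ht.1
  have ht1 : (0:ℝ) < 1 - t := by linarith [ht.2]
  have h1 : 1 + t / (1 - t) = (1 - t)⁻¹ := by field_simp; ring
  have h2 : (t / (1 - t)) ^ (s - 1) = t ^ (s - 1) / (1 - t) ^ (s - 1) :=
    Real.div_rpow ht0.le ht1.le (s - 1)
  rw [smul_eq_mul, h1, h2, abs_of_pos (by positivity : (0:ℝ) < ((1 - t) ^ 2)⁻¹),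
    Real.rpow_neg ht1.le, Real.rpow_sub ht1, Real.rpow_one]
  have hB : (1 - t) ^ s ≠ 0 := by positivity
  field_simp
  
theorem stmt_11 (a : ℝ) (ha : 1 < a) :
    ∫ x in Set.Ioi (0:ℝ), 1 / (1 + x ^ a) = π / a * (Real.sin (π / a))⁻¹ := by
  have ha0 : (0:ℝ) < a := by linarith
  have hs0 : 0 < 1 / a := by positivity
  have hs1 : 1 / a < 1 := by rw [div_lt_one ha0]; linarith
  have key := integral_rpow_div_one_add hs0 hs1
  have sub := MeasureTheory.integral_comp_rpow_Ioi (fun u => u ^ (1 / a - 1) / (1 + u)) ha0.ne'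
  rw [key] at sub
  have heq : ∀ x ∈ Set.Ioi (0:ℝ),
      (|a| * x ^ (a - 1)) • ((x ^ a) ^ (1 / a - 1) / (1 + x ^ a)) = a * (1 / (1 + x ^ a)) := by
    intro x hx
    have hx0 : (0:ℝ) < x := hx
    rw [smul_eq_mul, abs_of_pos ha0, ← Real.rpow_mul hx0.le]
    have he : a * (1 / a - 1) = 1 - a := by field_simp
    rw [he]
    have hxx : x ^ (a - 1) * x ^ (1 - a) = 1 := by
      rw [← Real.rpow_add hx0]; norm_num
    calc a * x ^ (a - 1) * (x ^ (1 - a) / (1 + x ^ a))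
        = a * ((x ^ (a - 1) * x ^ (1 - a)) / (1 + x ^ a)) := by ring
      _ = a * (1 / (1 + x ^ a)) := by rw [hxx]
  rw [MeasureTheory.setIntegral_congr_fun measurableSet_Ioi heq,
    MeasureTheory.integral_const_mul] at sub
  have hπa : π * (1 / a) = π / a := by ring
  rw [hπa] at sub
  have hI : ∫ x in Set.Ioi (0:ℝ), 1 / (1 + x ^ a) = π / Real.sin (π / a) / a := by
    rw [eq_div_iff ha0.ne']
    linear_combination sub
  rw [hI]
  ring
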